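/- Let G be a finite connected weighted graph (1-dimensional weighted simplicial complex) with weight m, and let λ be the smallest positive eigenvalue of the weighted graph Laplacian Δ_0^+. Then for every nonempty set U of vertices: λ·(m(U)/m(V)) + m(U, V∖U)/m(U) ≥ λ, where m(U) = Σ_{u∈U} m(u), m(V) = Σ_{v∈V} m(v), and m(U, V∖U) is the total weight of edges between U and its complement. In particular h^0(G) ≥ λ. -/

import Mathlib

open Finset

open scoped Classical RealInnerProductSpace

/-- The weight of a vertex of a weighted graph: the sum of the weights of the incident
edges. -/
noncomputable def vWeight {V : Type*} [Fintype V] (E : V → V → Prop) (w : V → V → ℝ)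
    (v : V) : ℝ :=
  ∑ u : V, if E v u then w v u else 0

/-- The weighted graph Laplacian
`Δ₀⁺φ(u) = φ(u) - Σ_{v : (u,v) ∈ E} (m((u,v))/m(u)) φ(v)`. -/
noncomputable def graphLap {V : Type*} [Fintype V] (E : V → V → Prop) (w : V → V → ℝ)
    (φ : V → ℝ) : V → ℝ :=
  fun u => φ u - ∑ v : V, if E u v then w u v / vWeight E w u * φ v else 0

/-- `μ` is an eigenvalue of the weighted graph Laplacian. -/
def graphEig {V : Type*} [Fintype V] (E : V → V → Prop) (w : V → V → ℝ) (μ : ℝ) : Prop :=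
  ∃ φ : V → ℝ, φ ≠ 0 ∧ ∀ u, graphLap E w φ u = μ * φ u

/-- The total weight `m(U) = Σ_{u ∈ U} m(u)` of a set of vertices. -/
noncomputable def setWeight {V : Type*} [Fintype V] (E : V → V → Prop) (w : V → V → ℝ)
    (U : Finset V) : ℝ :=
  ∑ u ∈ U, vWeight E w u

/-- The total weight `m(U, V∖U)` of the edges between `U` and its complement. -/
noncomputable def cutWeight {V : Type*} [Fintype V] (E : V → V → Prop) (w : V → V → ℝ)
    (U : Finset V) : ℝ :=
  ∑ u ∈ U, ∑ v ∈ Uᶜ, if E u v then w u v else 0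

namespace Stmt14Aux

variable {V : Type*} [Fintype V] (E : V → V → Prop) (w : V → V → ℝ)

noncomputable def sqm (v : V) : ℝ := Real.sqrt (vWeight E w v)

noncomputable def sVec : EuclideanSpace ℝ V := (WithLp.equiv 2 (V → ℝ)).symm fun v => sqm E w v

@[simp] lemma sVec_apply (v : V) : sVec E w v = sqm E w v := rfl

noncomputable def opT : EuclideanSpace ℝ V →ₗ[ℝ] EuclideanSpace ℝ V where
  toFun x := (WithLp.equiv 2 (V → ℝ)).symm fun u =>
    x u - ∑ v, (if E u v then w u v / (sqm E w u * sqm E w v) else 0) * x v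
  map_add' x y := by
    ext u
    simp only [WithLp.equiv_symm_apply, PiLp.toLp_apply, PiLp.add_apply, mul_add, Finset.sum_add_distrib]
    ring
  map_smul' c x := by
    ext u
    simp only [WithLp.equiv_symm_apply, PiLp.toLp_apply, PiLp.smul_apply, smul_eq_mul, RingHom.id_apply,
      mul_sub, Finset.mul_sum]
    congr 1
    exact Finset.sum_congr rfl fun v _ => by ring

lemma opT_apply (x : EuclideanSpace ℝ V) (u : V) :
    opT E w x u =
      x u - ∑ v, (if E u v then w u v / (sqm E w u * sqm E w v) else 0) * x v := rfl

lemma inner_eq (x y : EuclideanSpace ℝ V) : ⟪x, y⟫ = ∑ v, x v * y v := by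
  simp [PiLp.inner_apply, RCLike.inner_apply, conj_trivial]
  exact Finset.sum_congr rfl fun _ _ => mul_comm _ _


lemma sqm_pos (hNoIso : ∀ v, 0 < vWeight E w v) (v : V) : 0 < sqm E w v :=
  Real.sqrt_pos.2 (hNoIso v)

lemma sqm_mul_self (hNoIso : ∀ v, 0 < vWeight E w v) (v : V) :
    sqm E w v * sqm E w v = vWeight E w v :=
  Real.mul_self_sqrt (hNoIso v).le

lemma opT_isSymmetric (hsymm : ∀ u v, E u v → E v u) (hwsymm : ∀ u v, w u v = w v u) :
    (opT E w).IsSymmetric := by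
  have hc : ∀ u v, (if E u v then w u v / (sqm E w u * sqm E w v) else 0)
      = (if E v u then w v u / (sqm E w v * sqm E w u) else 0) := by
    intro u v
    by_cases h : E u v
    · rw [if_pos h, if_pos (hsymm u v h), hwsymm, mul_comm]
    · rw [if_neg h, if_neg fun h' => h (hsymm v u h')]
  intro x y
  simp only [inner_eq, opT_apply, sub_mul, mul_sub, Finset.sum_sub_distrib, Finset.sum_mul,
    Finset.mul_sum]
  congr 1
  rw [Finset.sum_comm]
  refine Finset.sum_congr rfl fun u _ => Finset.sum_congr rfl fun v _ => ?_
  rw [hc v u]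
  ring

lemma form (hsymm : ∀ u v, E u v → E v u) (hwsymm : ∀ u v, w u v = w v u)
    (hNoIso : ∀ v, 0 < vWeight E w v) (x : EuclideanSpace ℝ V) :
    ⟪opT E w x, x⟫ = (1/2) * ∑ u, ∑ v,
      (if E u v then w u v * (x u / sqm E w u - x v / sqm E w v)^2 else 0) := by
  have key : ∀ u, x u * x u = ∑ v, (if E u v then w u v * (x u / sqm E w u)^2 else 0) := by
    intro u
    have hs : sqm E w u ≠ 0 := (sqm_pos E w hNoIso u).ne'
    have h1 : x u * x u = vWeight E w u * (x u / sqm E w u)^2 := by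
      rw [div_pow, ← sqm_mul_self E w hNoIso u]
      field_simp
    rw [h1, vWeight, Finset.sum_mul]
    exact Finset.sum_congr rfl fun v _ => by split_ifs <;> simp
  calc ⟪opT E w x, x⟫
      = (∑ u, ∑ v, if E u v then w u v * (x u / sqm E w u)^2 else 0)
        - ∑ u, ∑ v, (if E u v then w u v * (x u / sqm E w u) * (x v / sqm E w v) else 0) := by
        rw [inner_eq]
        simp only [opT_apply, sub_mul, Finset.sum_sub_distrib, Finset.sum_mul]
        congr 1
        · exact Finset.sum_congr rfl fun u _ => key u
        · refine Finset.sum_congr rfl fun u _ => Finset.sum_congr rfl fun v _ => ?_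
          split_ifs with h
          · have hsu := (sqm_pos E w hNoIso u).ne'
            have hsv := (sqm_pos E w hNoIso v).ne'
            field_simp
          · simp
    _ = _ := by
        have hswap : ∑ u, ∑ v, (if E u v then w u v * (x v / sqm E w v)^2 else 0)
            = ∑ u, ∑ v, (if E u v then w u v * (x u / sqm E w u)^2 else 0) := by
          rw [Finset.sum_comm]
          refine Finset.sum_congr rfl fun u _ => Finset.sum_congr rfl fun v _ => ?_
          by_cases h : E u v
          · rw [if_pos h, if_pos (hsymm u v h), hwsymm]
          · rw [if_neg h, if_neg fun h' => h (hsymm v u h')]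
        have expand : ∀ u v : V,
            (if E u v then w u v * (x u / sqm E w u - x v / sqm E w v)^2 else 0)
            = (if E u v then w u v * (x u / sqm E w u)^2 else 0)
              + (if E u v then w u v * (x v / sqm E w v)^2 else 0)
              - 2 * (if E u v then w u v * (x u / sqm E w u) * (x v / sqm E w v) else 0) := by
          intro u v; split_ifs <;> ring
        simp only [expand, Finset.sum_sub_distrib, Finset.sum_add_distrib, ← Finset.mul_sum]
        rw [hswap]
        ring

lemma form_nonneg (hsymm : ∀ u v, E u v → E v u) (hwsymm : ∀ u v, w u v = w v u)
    (hw : ∀ u v, E u v → 0 < w u v) (hNoIso : ∀ v, 0 < vWeight E w v)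
    (x : EuclideanSpace ℝ V) : 0 ≤ ⟪opT E w x, x⟫ := by
  rw [form E w hsymm hwsymm hNoIso]
  have h : ∀ u v : V, 0 ≤ (if E u v then w u v * (x u / sqm E w u - x v / sqm E w v)^2 else 0) := by
    intro u v
    split_ifs with h
    · exact mul_nonneg (hw u v h).le (sq_nonneg _)
    · exact le_refl 0
  exact mul_nonneg (by norm_num)
    (Finset.sum_nonneg fun u _ => Finset.sum_nonneg fun v _ => h u v)

lemma ker_const [Nonempty V] (hsymm : ∀ u v, E u v → E v u) (hwsymm : ∀ u v, w u v = w v u)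
    (hw : ∀ u v, E u v → 0 < w u v) (hNoIso : ∀ v, 0 < vWeight E w v)
    (hconn : ∀ u v : V, Relation.ReflTransGen E u v)
    (x : EuclideanSpace ℝ V) (hx : opT E w x = 0) :
    ∃ c : ℝ, ∀ v, x v = c * sqm E w v := by
  have h0 : ⟪opT E w x, x⟫ = 0 := by rw [hx]; simp [inner_eq]
  rw [form E w hsymm hwsymm hNoIso] at h0
  have h0' : ∑ u : V, ∑ v : V,
      (if E u v then w u v * (x u / sqm E w u - x v / sqm E w v)^2 else 0) = 0 := by
    linarith
  have hnn : ∀ u ∈ (Finset.univ : Finset V), 0 ≤ ∑ v : V,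
      (if E u v then w u v * (x u / sqm E w u - x v / sqm E w v)^2 else 0) := by
    intro u _
    refine Finset.sum_nonneg fun v _ => ?_
    split_ifs with h
    · exact mul_nonneg (hw u v h).le (sq_nonneg _)
    · exact le_refl 0
  have hterm : ∀ u v : V,
      (if E u v then w u v * (x u / sqm E w u - x v / sqm E w v)^2 else 0) = 0 := by
    intro u v
    have hu := (Finset.sum_eq_zero_iff_of_nonneg hnn).1 h0' u (Finset.mem_univ u)
    have hnn2 : ∀ v ∈ (Finset.univ : Finset V),
        0 ≤ (if E u v then w u v * (x u / sqm E w u - x v / sqm E w v)^2 else 0) := by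
      intro v _
      split_ifs with h
      · exact mul_nonneg (hw u v h).le (sq_nonneg _)
      · exact le_refl 0
    exact (Finset.sum_eq_zero_iff_of_nonneg hnn2).1 hu v (Finset.mem_univ v)
  have hedge : ∀ u v : V, E u v → x u / sqm E w u = x v / sqm E w v := by
    intro u v h
    have ht := hterm u v
    rw [if_pos h] at ht
    rcases mul_eq_zero.1 ht with h' | h'
    · exact absurd h' (hw u v h).ne'
    · have := pow_eq_zero_iff (n := 2) (by norm_num) |>.1 h'
      linarith [sub_eq_zero.1 this]
  have hconst : ∀ u v : V, x u / sqm E w u = x v / sqm E w v := by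
    intro u v
    have h := hconn u v
    induction h with
    | refl => rfl
    | tail hab hbc ih => rw [ih]; exact hedge _ _ hbc
  refine ⟨x (Classical.arbitrary V) / sqm E w (Classical.arbitrary V), fun v => ?_⟩
  have hs : sqm E w v ≠ 0 := (sqm_pos E w hNoIso v).ne'
  rw [← hconst v (Classical.arbitrary V), div_mul_cancel₀ _ hs]

lemma eig_transfer (hNoIso : ∀ v, 0 < vWeight E w v) (μ : ℝ) (x : EuclideanSpace ℝ V)
    (hx0 : x ≠ 0) (hx : opT E w x = μ • x) : graphEig E w μ := by
  refine ⟨fun v => x v / sqm E w v, ?_, ?_⟩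
  · intro h
    apply hx0
    ext v
    have hv := congrFun h v
    simp only [Pi.zero_apply] at hv
    have hs : sqm E w v ≠ 0 := (sqm_pos E w hNoIso v).ne'
    have := (div_eq_zero_iff.1 hv).resolve_right hs
    simpa using this
  · intro u
    have hu : opT E w x u = μ * x u := by rw [hx]; rfl
    have hsu : sqm E w u ≠ 0 := (sqm_pos E w hNoIso u).ne'
    have hmu : vWeight E w u = sqm E w u * sqm E w u := (sqm_mul_self E w hNoIso u).symm
    simp only [graphLap]
    have hsum : ∑ v : V, (if E u v then w u v / vWeight E w u * (x v / sqm E w v) else 0)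
        = (∑ v : V, (if E u v then w u v / (sqm E w u * sqm E w v) else 0) * x v)
            / sqm E w u := by
      rw [Finset.sum_div]
      refine Finset.sum_congr rfl fun v _ => ?_
      have hsv : sqm E w v ≠ 0 := (sqm_pos E w hNoIso v).ne'
      split_ifs with h
      · rw [hmu, div_mul_div_comm, div_mul_eq_mul_div, div_div, mul_right_comm]
      · simp
    rw [hsum, ← sub_div]
    have : x u - ∑ v : V, (if E u v then w u v / (sqm E w u * sqm E w v) else 0) * x v
        = opT E w x u := rfl
    rw [this, hu, mul_div_assoc]


lemma rayleigh [Nonempty V] (hsymm : ∀ u v, E u v → E v u) (hwsymm : ∀ u v, w u v = w v u)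
    (hw : ∀ u v, E u v → 0 < w u v) (hNoIso : ∀ v, 0 < vWeight E w v)
    (hconn : ∀ u v : V, Relation.ReflTransGen E u v)
    (lam : ℝ) (hlam : IsLeast {μ : ℝ | 0 < μ ∧ graphEig E w μ} lam)
    (x : EuclideanSpace ℝ V) (hx : ⟪sVec E w, x⟫ = 0) :
    lam * ⟪x, x⟫ ≤ ⟪opT E w x, x⟫ := by
  have hsym : (opT E w).IsSymmetric := opT_isSymmetric E w hsymm hwsymm
  have hrank : Module.finrank ℝ (EuclideanSpace ℝ V) = Fintype.card V := finrank_euclideanSpace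
  set b := hsym.eigenvectorBasis hrank with hb
  set μ := hsym.eigenvalues hrank with hμ
  have heig : ∀ i, opT E w (b i) = μ i • b i := fun i => by
    exact hsym.apply_eigenvectorBasis hrank i
  have hbne : ∀ i, (b i : EuclideanSpace ℝ V) ≠ 0 := fun i =>
    (hsym.hasEigenvector_eigenvectorBasis hrank i).2
  have hrepr : ∑ i, ⟪b i, x⟫ • b i = x := b.sum_repr' x
  have hTx : opT E w x = ∑ i, (μ i * ⟪b i, x⟫) • b i := by
    conv_lhs => rw [← hrepr]
    rw [map_sum]
    refine Finset.sum_congr rfl fun i _ => ?_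
    rw [map_smul, heig i, smul_smul, mul_comm]
  have h1 : ⟪opT E w x, x⟫ = ∑ i, μ i * ⟪b i, x⟫^2 := by
    rw [hTx, sum_inner]
    refine Finset.sum_congr rfl fun i _ => ?_
    rw [real_inner_smul_left]; ring
  have h2 : ⟪x, x⟫ = ∑ i, ⟪b i, x⟫^2 := by
    rw [← b.sum_inner_mul_inner x x]
    exact Finset.sum_congr rfl fun i _ => by rw [real_inner_comm x (b i)]; ring
  rw [h1, h2, Finset.mul_sum]
  refine Finset.sum_le_sum fun i _ => ?_
  by_cases h0 : μ i = 0
  · have hker : opT E w (b i) = 0 := by rw [heig i, h0, zero_smul]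
    obtain ⟨c, hc⟩ := ker_const E w hsymm hwsymm hw hNoIso hconn (b i) hker
    have hbi : (b i : EuclideanSpace ℝ V) = c • sVec E w := by
      ext v
      simpa [sVec, sqm] using hc v
    have hz : ⟪b i, x⟫ = 0 := by rw [hbi, real_inner_smul_left, hx, mul_zero]
    rw [hz, h0]
    simp
  · have hb1 : ⟪(b i : EuclideanSpace ℝ V), b i⟫ = 1 := by
      have hn := b.orthonormal.1 i
      rw [real_inner_self_eq_norm_sq, hn]
      norm_num
    have hnn : 0 ≤ μ i := by
      have hf := form_nonneg E w hsymm hwsymm hw hNoIso (b i)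
      rw [heig i, real_inner_smul_left, hb1, mul_one] at hf
      exact hf
    have hge : lam ≤ μ i := by
      apply hlam.2
      exact ⟨lt_of_le_of_ne hnn (Ne.symm h0),
        eig_transfer E w hNoIso (μ i) (b i) (hbne i) (heig i)⟩
    exact mul_le_mul_of_nonneg_right hge (sq_nonneg _)


lemma keyineq [Nonempty V] (hsymm : ∀ u v, E u v → E v u) (hwsymm : ∀ u v, w u v = w v u)
    (hw : ∀ u v, E u v → 0 < w u v) (hNoIso : ∀ v, 0 < vWeight E w v)
    (hconn : ∀ u v : V, Relation.ReflTransGen E u v)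
    (lam : ℝ) (hlam : IsLeast {μ : ℝ | 0 < μ ∧ graphEig E w μ} lam)
    (U : Finset V) (hU : U.Nonempty) :
    lam * (setWeight E w U / setWeight E w Finset.univ) +
      cutWeight E w U / setWeight E w U ≥ lam := by
  set mU := setWeight E w U with hmUdef
  set mV := setWeight E w Finset.univ with hmVdef
  have hmUs : ∑ u ∈ U, vWeight E w u = mU := rfl
  have hmVs : ∑ u : V, vWeight E w u = mV := rfl
  have hmU : 0 < mU := by rw [← hmUs]; exact Finset.sum_pos (fun v _ => hNoIso v) hU
  have hmV : 0 < mV := by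
    rw [← hmVs]; exact Finset.sum_pos (fun v _ => hNoIso v) Finset.univ_nonempty
  set t := mU / mV with ht
  have htmV : t * mV = mU := by rw [ht, div_mul_cancel₀ _ hmV.ne']
  set x : EuclideanSpace ℝ V := (WithLp.equiv 2 (V → ℝ)).symm
    (fun v => ((if v ∈ U then (1:ℝ) else 0) - t) * sqm E w v) with hxdef
  have hxapp : ∀ v, x v = ((if v ∈ U then (1:ℝ) else 0) - t) * sqm E w v := fun v => rfl
  have hxdiv : ∀ v, x v / sqm E w v = (if v ∈ U then (1:ℝ) else 0) - t := by
    intro v; rw [hxapp, mul_div_cancel_right₀ _ (sqm_pos E w hNoIso v).ne']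
  -- orthogonality
  have horth : ⟪sVec E w, x⟫ = 0 := by
    rw [inner_eq]
    have hterm : ∀ v : V, sVec E w v * x v
        = (if v ∈ U then vWeight E w v else 0) - vWeight E w v * t := by
      intro v
      rw [sVec_apply, hxapp, ← sqm_mul_self E w hNoIso v]
      split_ifs <;> ring
    simp only [hterm, Finset.sum_sub_distrib]
    rw [Finset.sum_ite_mem, Finset.univ_inter, ← Finset.sum_mul, hmUs, hmVs]
    linarith [htmV]
  -- quadratic form value
  have hQ : ⟪opT E w x, x⟫ = cutWeight E w U := by
    rw [form E w hsymm hwsymm hNoIso]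
    have hterm : ∀ u v : V,
        (if E u v then w u v * (x u / sqm E w u - x v / sqm E w v)^2 else 0)
        = (if E u v then w u v *
            ((if u ∈ U then (1:ℝ) else 0) - (if v ∈ U then (1:ℝ) else 0))^2 else 0) := by
      intro u v
      by_cases h : E u v
      · rw [if_pos h, if_pos h, hxdiv, hxdiv]; ring_nf
      · rw [if_neg h, if_neg h]
    simp only [hterm]
    have hsplit : ∀ (f : V → V → ℝ), ∑ u : V, ∑ v : V, f u v
        = ((∑ u ∈ U, ∑ v ∈ U, f u v) + (∑ u ∈ U, ∑ v ∈ Uᶜ, f u v))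
          + ((∑ u ∈ Uᶜ, ∑ v ∈ U, f u v) + (∑ u ∈ Uᶜ, ∑ v ∈ Uᶜ, f u v)) := by
      intro f
      rw [← Finset.sum_add_sum_compl U (fun u => ∑ v : V, f u v)]
      congr 1
      · rw [← Finset.sum_add_distrib]
        exact Finset.sum_congr rfl fun u _ => (Finset.sum_add_sum_compl U _).symm
      · rw [← Finset.sum_add_distrib]
        exact Finset.sum_congr rfl fun u _ => (Finset.sum_add_sum_compl U _).symm
    rw [hsplit]
    have hUU : (∑ u ∈ U, ∑ v ∈ U, if E u v then w u v *
        ((if u ∈ U then (1:ℝ) else 0) - (if v ∈ U then (1:ℝ) else 0))^2 else 0) = 0 :=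
      Finset.sum_eq_zero fun u hu => Finset.sum_eq_zero fun v hv => by simp [hu, hv]
    have hCC : (∑ u ∈ Uᶜ, ∑ v ∈ Uᶜ, if E u v then w u v *
        ((if u ∈ U then (1:ℝ) else 0) - (if v ∈ U then (1:ℝ) else 0))^2 else 0) = 0 :=
      Finset.sum_eq_zero fun u hu => Finset.sum_eq_zero fun v hv => by
        simp [Finset.mem_compl.1 hu, Finset.mem_compl.1 hv]
    have hUC : (∑ u ∈ U, ∑ v ∈ Uᶜ, if E u v then w u v *
        ((if u ∈ U then (1:ℝ) else 0) - (if v ∈ U then (1:ℝ) else 0))^2 else 0)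
        = cutWeight E w U := by
      refine Finset.sum_congr rfl fun u hu => Finset.sum_congr rfl fun v hv => ?_
      simp [hu, Finset.mem_compl.1 hv]
    have hCU : (∑ u ∈ Uᶜ, ∑ v ∈ U, if E u v then w u v *
        ((if u ∈ U then (1:ℝ) else 0) - (if v ∈ U then (1:ℝ) else 0))^2 else 0)
        = cutWeight E w U := by
      rw [Finset.sum_comm]
      refine Finset.sum_congr rfl fun u hu => Finset.sum_congr rfl fun v hv => ?_
      have h1 : u ∈ U := hu
      have h2 : v ∉ U := Finset.mem_compl.1 hv
      by_cases h : E v u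
      · rw [if_pos h, if_pos (hsymm v u h), hwsymm v u]
        simp [h1, h2]
      · rw [if_neg h, if_neg fun h' => h (hsymm u v h')]
    rw [hUU, hCC, hUC, hCU]
    ring
  -- norm value
  have hN : ⟪x, x⟫ = mU * (1 - t) := by
    rw [inner_eq]
    have hterm : ∀ v : V, x v * x v
        = vWeight E w v * ((if v ∈ U then (1:ℝ) else 0) - t)^2 := by
      intro v; rw [hxapp, ← sqm_mul_self E w hNoIso v]; ring
    simp only [hterm]
    rw [← Finset.sum_add_sum_compl U]
    have hA : ∑ v ∈ U, vWeight E w v * ((if v ∈ U then (1:ℝ) else 0) - t)^2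
        = mU * (1 - t)^2 := by
      rw [← hmUs, Finset.sum_mul]
      exact Finset.sum_congr rfl fun v hv => by rw [if_pos hv]
    have hcomplsum : ∑ v ∈ Uᶜ, vWeight E w v = mV - mU := by
      have := Finset.sum_add_sum_compl U (vWeight E w)
      rw [hmUs, hmVs] at this
      linarith
    have hB : ∑ v ∈ Uᶜ, vWeight E w v * ((if v ∈ U then (1:ℝ) else 0) - t)^2
        = (mV - mU) * t^2 := by
      rw [← hcomplsum, Finset.sum_mul]
      refine Finset.sum_congr rfl fun v hv => ?_
      rw [if_neg (Finset.mem_compl.1 hv)]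
      ring
    rw [hA, hB]
    linear_combination t * htmV
  have hr := rayleigh E w hsymm hwsymm hw hNoIso hconn lam hlam x horth
  rw [hQ, hN] at hr
  have h2 : lam * (1 - t) ≤ cutWeight E w U / mU := by
    rw [le_div_iff₀ hmU]
    nlinarith [hr]
  have hexp : lam * (1 - t) = lam - lam * t := by ring
  rw [hexp] at h2
  linarith

end Stmt14Aux

/-- (The Cheeger-type inequality `h⁰(G) ≥ λ(G)`.)  Let `G` be a finite
connected weighted graph with weight `m` (positive symmetric edge weights, every vertex in an
edge), and let `λ` be the smallest positive eigenvalue of the weighted graph Laplacian `Δ₀⁺`.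
Then for every nonempty set `U` of vertices
`λ·(m(U)/m(V)) + m(U, V∖U)/m(U) ≥ λ`; in particular `h⁰(G) ≥ λ`, where `h⁰(G)` is the largest
`ε ≥ 0` such that this inequality holds with `ε` in place of `λ` for all nonempty `U`. -/
theorem stmt14 {V : Type*} [Fintype V] [Nonempty V]
    (E : V → V → Prop) (hsymm : ∀ u v, E u v → E v u) (hirr : ∀ u, ¬ E u u)
    (w : V → V → ℝ) (hw : ∀ u v, E u v → 0 < w u v) (hwsymm : ∀ u v, w u v = w v u)
    (hNoIso : ∀ v, 0 < vWeight E w v)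
    (hconn : ∀ u v : V, Relation.ReflTransGen E u v)
    (lam : ℝ) (hlam : IsLeast {μ : ℝ | 0 < μ ∧ graphEig E w μ} lam) :
    (∀ U : Finset V, U.Nonempty →
      lam * (setWeight E w U / setWeight E w Finset.univ) +
          cutWeight E w U / setWeight E w U ≥ lam) ∧
    lam ≤ sSup {ε : ℝ | 0 ≤ ε ∧ ∀ U : Finset V, U.Nonempty →
      ε * (setWeight E w U / setWeight E w Finset.univ) +
          cutWeight E w U / setWeight E w U ≥ ε} := by
  have key := Stmt14Aux.keyineq E w hsymm hwsymm hw hNoIso hconn lam hlam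
  refine ⟨key, ?_⟩
  have hmem : lam ∈ {ε : ℝ | 0 ≤ ε ∧ ∀ U : Finset V, U.Nonempty →
      ε * (setWeight E w U / setWeight E w Finset.univ) +
          cutWeight E w U / setWeight E w U ≥ ε} := ⟨hlam.1.1.le, key⟩
  refine le_csSup ?_ hmem
  -- bounded above
  obtain ⟨v0⟩ := ‹Nonempty V›
  have hv1 : ∃ v1 : V, v1 ≠ v0 := by
    by_contra h
    push_neg at h
    have hz : vWeight E w v0 = 0 := by
      rw [vWeight]
      refine Finset.sum_eq_zero fun u _ => ?_
      rw [h u] at *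
      exact if_neg (hirr v0)
    exact absurd hz (hNoIso v0).ne'
  obtain ⟨v1, hv1⟩ := hv1
  have hU0 : ({v0} : Finset V).Nonempty := ⟨v0, Finset.mem_singleton_self v0⟩
  have hmU0 : 0 < setWeight E w {v0} := by
    rw [setWeight, Finset.sum_singleton]; exact hNoIso v0
  have hmV : 0 < setWeight E w Finset.univ :=
    Finset.sum_pos (fun v _ => hNoIso v) Finset.univ_nonempty
  have hlt : setWeight E w {v0} < setWeight E w Finset.univ := by
    refine Finset.sum_lt_sum_of_subset (Finset.subset_univ _) (Finset.mem_univ v1)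
      (by simp [hv1]) (hNoIso v1) fun j _ _ => (hNoIso j).le
  set q := setWeight E w {v0} / setWeight E w Finset.univ with hq
  have hq1 : q < 1 := (div_lt_one hmV).2 hlt
  have h1q : 0 < 1 - q := by linarith
  refine ⟨cutWeight E w {v0} / setWeight E w {v0} / (1 - q), fun ε hε => ?_⟩
  obtain ⟨hε0, hεall⟩ := hε
  have h := hεall {v0} hU0
  rw [le_div_iff₀ h1q]
  have hexp : ε * (1 - q) = ε - ε * q := by ring
  rw [hexp]
  linarith [h]
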